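/- (WAE convergence, special case D = D') Let χ and M be compact metric spaces, c₁ : χ → M and g₁ : M → χ locally Lipschitz, and AE = g₁ ∘ c₁. Let P_D be a Borel probability measure on χ and P_Z a compactly supported Borel probability measure on M. Then there exists b ≥ 0 such that W(P_D, g₁#P_Z) ≤ W(P_D, AE#P_D) + b·W(c₁#P_D, P_Z). -/

import Mathlib

open MeasureTheory ENNReal NNReal ProbabilityTheory Metric

/-- The 1-Wasserstein distance, as the infimum over transference plans of the
expected (extended) distance. -/
noncomputable def wassersteinDist {X : Type*} [MeasurableSpace X] [PseudoEMetricSpace X]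
    (μ ν : Measure X) : ℝ≥0∞ :=
  ⨅ γ ∈ {γ : Measure (X × X) | γ.map Prod.fst = μ ∧ γ.map Prod.snd = ν},
    ∫⁻ p, edist p.1 p.2 ∂γ

theorem loclip {X Y : Type*} [MetricSpace X] [CompactSpace X] [MetricSpace Y]

    {f : X → Y} (hf : LocallyLipschitz f) : ∃ K : ℝ≥0, LipschitzWith K f := by
  have hbd : ∃ D : ℝ, 0 ≤ D ∧ ∀ a b : X, dist (f a) (f b) ≤ D := by
    obtain ⟨C, hC⟩ := Metric.isBounded_iff.1 (isCompact_range hf.continuous).isBounded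
    rcases isEmpty_or_nonempty X with h | h
    · exact ⟨0, le_refl 0, fun a => (IsEmpty.false a).elim⟩
    · refine ⟨C, ?_, fun a b => hC (Set.mem_range_self a) (Set.mem_range_self b)⟩
      have := hC (Set.mem_range_self (Classical.arbitrary X))
        (Set.mem_range_self (Classical.arbitrary X))
      simpa using this
  obtain ⟨D, hD0, hD⟩ := hbd
  choose K t ht hK using hf
  obtain ⟨s, hs⟩ := IsCompact.elim_finite_subcover isCompact_univ
    (fun x => interior (t x)) (fun x => isOpen_interior)
    (fun x _ => Set.mem_iUnion.2 ⟨x, mem_interior_iff_mem_nhds.2 (ht x)⟩)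
  have hcov : (Set.univ : Set X) ⊆ ⋃ i : s, interior (t i) := by
    intro x hx
    obtain ⟨i, hi, hxi⟩ := Set.mem_iUnion₂.1 (hs hx)
    exact Set.mem_iUnion.2 ⟨⟨i, hi⟩, hxi⟩
  obtain ⟨δ, hδ, hball⟩ := lebesgue_number_lemma_of_metric isCompact_univ
    (fun i : s => isOpen_interior) hcov
  set Km : ℝ≥0 := s.sup K with hKm
  refine ⟨Km + ⟨D / δ, by positivity⟩, LipschitzWith.of_dist_le_mul fun a b => ?_⟩
  rcases lt_or_ge (dist a b) δ with h | h
  · obtain ⟨i, hi⟩ := hball a (Set.mem_univ a)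
    have hai : a ∈ t i := interior_subset (hi (mem_ball_self hδ))
    have hbi : b ∈ t i := interior_subset (hi (by simpa [mem_ball, dist_comm] using h))
    calc dist (f a) (f b) ≤ K i * dist a b := (hK i).dist_le_mul a hai b hbi
      _ ≤ (Km + ⟨D / δ, by positivity⟩ : ℝ≥0) * dist a b := by
          apply mul_le_mul_of_nonneg_right _ dist_nonneg
          have h1 : K (i : X) ≤ Km := Finset.le_sup i.2
          have : Km ≤ Km + ⟨D / δ, by positivity⟩ := le_self_add
          exact_mod_cast le_trans h1 this
  · calc dist (f a) (f b) ≤ D := hD a b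
      _ = D / δ * δ := by field_simp
      _ ≤ (Km + ⟨D / δ, by positivity⟩ : ℝ≥0) * dist a b := by
          apply mul_le_mul _ h (le_of_lt hδ) (by positivity)
          push_cast; exact (le_add_of_nonneg_left Km.2 : D / δ ≤ (Km : ℝ) + D / δ)

theorem wass_le {X : Type*} [MeasurableSpace X] [PseudoEMetricSpace X]
    {μ ν : Measure X} {γ : Measure (X × X)}
    (h1 : γ.map Prod.fst = μ) (h2 : γ.map Prod.snd = ν) :
    wassersteinDist μ ν ≤ ∫⁻ p, edist p.1 p.2 ∂γ :=
  iInf₂_le γ ⟨h1, h2⟩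

theorem coupling_prob {X : Type*} [MeasurableSpace X]
    {μ : Measure X} [IsProbabilityMeasure μ] {γ : Measure (X × X)}
    (h : γ.map Prod.fst = μ) : IsProbabilityMeasure γ := by
  constructor
  have := congrArg (fun m : Measure X => m Set.univ) h
  simpa [Measure.map_apply measurable_fst MeasurableSet.univ] using this

theorem glue {X : Type*} [MetricSpace X] [CompactSpace X] [MeasurableSpace X] [BorelSpace X]
    {μ κ ν : Measure X} [IsProbabilityMeasure μ] [IsProbabilityMeasure κ] [IsProbabilityMeasure ν]
    (γ₁ γ₂ : Measure (X × X)) [IsFiniteMeasure γ₁] [IsFiniteMeasure γ₂]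
    (h1f : γ₁.map Prod.fst = μ) (h1s : γ₁.map Prod.snd = κ)
    (h2f : γ₂.map Prod.fst = κ) (h2s : γ₂.map Prod.snd = ν) :
    ∃ γ : Measure (X × X), γ.map Prod.fst = μ ∧ γ.map Prod.snd = ν ∧
      ∫⁻ p, edist p.1 p.2 ∂γ ≤ ∫⁻ p, edist p.1 p.2 ∂γ₁ + ∫⁻ p, edist p.1 p.2 ∂γ₂ := by
  have : Nonempty X := Measure.nonempty_of_neZero μ
  set ρ₁ : Measure (X × X) := γ₁.map Prod.swap with hρ₁
  have hρ₁fst : ρ₁.fst = κ := by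
    rw [hρ₁, Measure.fst, Measure.map_map measurable_fst measurable_swap]
    exact h1s
  have hγ₂fst : γ₂.fst = κ := h2f
  have hρ₁fin : IsFiniteMeasure ρ₁ := by
    rw [hρ₁]
    exact Measure.isFiniteMeasure_map γ₁ Prod.swap
  set k₁ := ρ₁.condKernel with hk₁
  set k₂ := γ₂.condKernel with hk₂
  have hd1 : κ ⊗ₘ k₁ = ρ₁ := by rw [← hρ₁fst, hk₁]; exact ρ₁.disintegrate ρ₁.condKernel
  have hd2 : κ ⊗ₘ k₂ = γ₂ := by rw [← hγ₂fst, hk₂]; exact γ₂.disintegrate γ₂.condKernel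
  have hedist : Measurable fun p : X × X => edist p.1 p.2 :=
    continuous_edist.measurable
  -- marginals
  have hfst : ((κ ⊗ₘ (k₁ ×ₖ k₂)).map Prod.snd).map Prod.fst = μ := by
    rw [Measure.map_map measurable_fst measurable_snd]
    ext u hu
    rw [Measure.map_apply (measurable_fst.comp measurable_snd) hu,
      Measure.compProd_apply ((measurable_fst.comp measurable_snd) hu)]
    have : ∀ y : X, (Prod.mk y ⁻¹' ((Prod.fst ∘ Prod.snd : X × X × X → X) ⁻¹' u))
        = u ×ˢ Set.univ := by
      intro y; ext p; simp [Set.mem_prod]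
    simp_rw [this, Kernel.prod_apply, Measure.prod_prod, measure_univ, mul_one]
    have : ∫⁻ y, k₁ y u ∂κ = (κ ⊗ₘ k₁) (Set.univ ×ˢ u) := by
      rw [Measure.compProd_apply_prod MeasurableSet.univ hu,
        Measure.restrict_univ]
    rw [this, hd1, hρ₁]
    have : (Set.univ ×ˢ u : Set (X × X)) = Prod.snd ⁻¹' u := by ext p; simp
    rw [this, Measure.map_apply measurable_swap (measurable_snd hu), ← h1f,
      Measure.map_apply measurable_fst hu]
    rfl
  have hsnd : ((κ ⊗ₘ (k₁ ×ₖ k₂)).map Prod.snd).map Prod.snd = ν := by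
    rw [Measure.map_map measurable_snd measurable_snd]
    ext u hu
    rw [Measure.map_apply (measurable_snd.comp measurable_snd) hu,
      Measure.compProd_apply ((measurable_snd.comp measurable_snd) hu)]
    have : ∀ y : X, (Prod.mk y ⁻¹' ((Prod.snd ∘ Prod.snd : X × X × X → X) ⁻¹' u))
        = Set.univ ×ˢ u := by
      intro y; ext p; simp [Set.mem_prod]
    simp_rw [this, Kernel.prod_apply, Measure.prod_prod, measure_univ, one_mul]
    have : ∫⁻ y, k₂ y u ∂κ = (κ ⊗ₘ k₂) (Set.univ ×ˢ u) := by
      rw [Measure.compProd_apply_prod MeasurableSet.univ hu, Measure.restrict_univ]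
    rw [this, hd2, ← h2s, Measure.map_apply measurable_snd hu]
    congr 1
    ext p; simp
  refine ⟨(κ ⊗ₘ (k₁ ×ₖ k₂)).map Prod.snd, hfst, hsnd, ?_⟩
  -- cost bound
  rw [lintegral_map hedist measurable_snd,
    Measure.lintegral_compProd (f := fun a : X × X × X => edist a.2.1 a.2.2) (by fun_prop)]
  simp_rw [Kernel.prod_apply]
  have key : ∀ y : X, ∫⁻ p : X × X, edist p.1 p.2 ∂((k₁ y).prod (k₂ y))
      ≤ (∫⁻ x, edist x y ∂(k₁ y)) + ∫⁻ z, edist y z ∂(k₂ y) := by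
    intro y
    have h1 : ∫⁻ p : X × X, edist p.1 p.2 ∂((k₁ y).prod (k₂ y))
        ≤ ∫⁻ p : X × X, (edist p.1 y + edist y p.2) ∂((k₁ y).prod (k₂ y)) :=
      lintegral_mono fun p => edist_triangle _ _ _
    refine h1.trans_eq ?_
    rw [lintegral_add_left (by fun_prop)]
    congr 1
    · rw [MeasureTheory.lintegral_prod _ (by fun_prop)]
      simp [lintegral_const]
    · rw [MeasureTheory.lintegral_prod _ (by fun_prop)]
      simp [MeasureTheory.lintegral_const]
  calc ∫⁻ y, ∫⁻ p : X × X, edist p.1 p.2 ∂((k₁ y).prod (k₂ y)) ∂κ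
      ≤ ∫⁻ y, ((∫⁻ x, edist x y ∂(k₁ y)) + ∫⁻ z, edist y z ∂(k₂ y)) ∂κ :=
        lintegral_mono key
    _ = (∫⁻ y, ∫⁻ x, edist x y ∂(k₁ y) ∂κ) + ∫⁻ y, ∫⁻ z, edist y z ∂(k₂ y) ∂κ := by
        exact lintegral_add_left
          (Measurable.lintegral_kernel_prod_right' (κ := k₁)
            (f := fun p : X × X => edist p.2 p.1) (by fun_prop)) _
    _ = ∫⁻ p, edist p.1 p.2 ∂γ₁ + ∫⁻ p, edist p.1 p.2 ∂γ₂ := by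
        congr 1
        · rw [← Measure.lintegral_compProd (f := fun p : X × X => edist p.2 p.1) (by fun_prop),
            hd1, hρ₁, lintegral_map (by fun_prop) measurable_swap]
          rfl
        · rw [← Measure.lintegral_compProd (f := fun p : X × X => edist p.1 p.2) (by fun_prop),
            hd2]

theorem wtri {X : Type*} [MetricSpace X] [CompactSpace X] [MeasurableSpace X] [BorelSpace X]
    (μ κ ν : Measure X) [IsProbabilityMeasure μ] [IsProbabilityMeasure κ]
    [IsProbabilityMeasure ν] :
    wassersteinDist μ ν ≤ wassersteinDist μ κ + wassersteinDist κ ν := by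
  refine ENNReal.le_of_forall_pos_le_add fun ε hε hfin => ?_
  have h1fin : wassersteinDist μ κ < ∞ := lt_of_le_of_lt le_self_add hfin
  have h2fin : wassersteinDist κ ν < ∞ := lt_of_le_of_lt le_add_self hfin
  have hε2 : (0 : ℝ≥0∞) < ε / 2 := by
    simp [ENNReal.div_pos_iff, hε.ne']
  have h1 : wassersteinDist μ κ < wassersteinDist μ κ + ε / 2 :=
    ENNReal.lt_add_right h1fin.ne hε2.ne'
  have h2 : wassersteinDist κ ν < wassersteinDist κ ν + ε / 2 :=
    ENNReal.lt_add_right h2fin.ne hε2.ne'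
  rw [wassersteinDist, iInf_lt_iff] at h1 h2
  obtain ⟨γ₁, h1'⟩ := h1
  obtain ⟨γ₂, h2'⟩ := h2
  rw [iInf_lt_iff] at h1' h2'
  obtain ⟨⟨h1f, h1s⟩, hI1⟩ := h1'
  obtain ⟨⟨h2f, h2s⟩, hI2⟩ := h2'
  haveI : IsProbabilityMeasure γ₁ := coupling_prob h1f
  haveI : IsProbabilityMeasure γ₂ := coupling_prob h2f
  obtain ⟨γ, hgf, hgs, hcost⟩ := glue γ₁ γ₂ h1f h1s h2f h2s
  calc wassersteinDist μ ν ≤ ∫⁻ p, edist p.1 p.2 ∂γ := wass_le hgf hgs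
    _ ≤ ∫⁻ p, edist p.1 p.2 ∂γ₁ + ∫⁻ p, edist p.1 p.2 ∂γ₂ := hcost
    _ ≤ (wassersteinDist μ κ + ε / 2) + (wassersteinDist κ ν + ε / 2) :=
        add_le_add hI1.le hI2.le
    _ = wassersteinDist μ κ + wassersteinDist κ ν + ε := by
        rw [add_add_add_comm, ENNReal.add_halves]

theorem wmap {X Y : Type*} [MetricSpace X] [CompactSpace X] [MeasurableSpace X] [BorelSpace X]
    [MetricSpace Y] [CompactSpace Y] [MeasurableSpace Y] [BorelSpace Y]
    {g : X → Y} {L : ℝ≥0} (hg : LipschitzWith L g)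
    (μ ν : Measure X) [IsProbabilityMeasure μ] [IsProbabilityMeasure ν] :
    wassersteinDist (μ.map g) (ν.map g) ≤ L * wassersteinDist μ ν := by
  have hgm : Measurable g := hg.continuous.measurable
  have key : ∀ γ ∈ {γ : Measure (X × X) | γ.map Prod.fst = μ ∧ γ.map Prod.snd = ν},
      wassersteinDist (μ.map g) (ν.map g) ≤ L * ∫⁻ p, edist p.1 p.2 ∂γ := by
    rintro γ ⟨hf, hs⟩
    have hmm : Measurable (Prod.map g g) := hgm.prodMap hgm
    have hcf : (γ.map (Prod.map g g)).map Prod.fst = μ.map g := by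
      rw [Measure.map_map measurable_fst hmm, ← hf,
        Measure.map_map hgm measurable_fst]
      rfl
    have hcs : (γ.map (Prod.map g g)).map Prod.snd = ν.map g := by
      rw [Measure.map_map measurable_snd hmm, ← hs,
        Measure.map_map hgm measurable_snd]
      rfl
    calc wassersteinDist (μ.map g) (ν.map g)
        ≤ ∫⁻ p, edist p.1 p.2 ∂(γ.map (Prod.map g g)) := wass_le hcf hcs
      _ = ∫⁻ p : X × X, edist (g p.1) (g p.2) ∂γ := by
          rw [lintegral_map continuous_edist.measurable hmm]; rfl
      _ ≤ ∫⁻ p : X × X, L * edist p.1 p.2 ∂γ :=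
          lintegral_mono fun p => hg.edist_le_mul _ _
      _ = L * ∫⁻ p, edist p.1 p.2 ∂γ := lintegral_const_mul _ continuous_edist.measurable
  have hne : Nonempty {γ : Measure (X × X) //
      γ.map Prod.fst = μ ∧ γ.map Prod.snd = ν} := by
    refine ⟨⟨μ.prod ν, ?_, ?_⟩⟩
    · simp [Measure.map_fst_prod]
    · simp [Measure.map_snd_prod]
  have : (L : ℝ≥0∞) * wassersteinDist μ ν
      = ⨅ γ : {γ : Measure (X × X) // γ.map Prod.fst = μ ∧ γ.map Prod.snd = ν},
        L * ∫⁻ p, edist p.1 p.2 ∂(γ : Measure (X × X)) := by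
    rw [wassersteinDist, iInf_subtype']
    exact ENNReal.mul_iInf' (by simp) (fun _ => hne)
  rw [this]
  exact le_iInf fun γ => key γ γ.2

/-- WAE convergence guarantee (special case D = D' of the
Mind2Mind theorem). -/
theorem wae_convergence
    {χ M : Type*} [MetricSpace χ] [MeasurableSpace χ] [BorelSpace χ] [CompactSpace χ]
    [MetricSpace M] [MeasurableSpace M] [BorelSpace M] [CompactSpace M]
    (c₁ : χ → M) (g₁ : M → χ) (hc₁ : LocallyLipschitz c₁) (hg₁ : LocallyLipschitz g₁)
    (PD : Measure χ) [IsProbabilityMeasure PD]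
    (PZ : Measure M) [IsProbabilityMeasure PZ]
    (hsupp : ∃ K : Set M, IsCompact K ∧ PZ Kᶜ = 0) :
    ∃ b : ℝ≥0,
      wassersteinDist PD (PZ.map g₁)
        ≤ wassersteinDist PD (PD.map (g₁ ∘ c₁))
          + b * wassersteinDist (PD.map c₁) PZ := by
  obtain ⟨L, hL⟩ := loclip hg₁
  have hgm : Measurable g₁ := hL.continuous.measurable
  have hcm : Measurable c₁ := hc₁.continuous.measurable
  haveI : IsProbabilityMeasure (PD.map c₁) := Measure.isProbabilityMeasure_map hcm.aemeasurable
  haveI : IsProbabilityMeasure (PZ.map g₁) := Measure.isProbabilityMeasure_map hgm.aemeasurable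
  haveI : IsProbabilityMeasure ((PD.map c₁).map g₁) :=
    Measure.isProbabilityMeasure_map hgm.aemeasurable
  refine ⟨L, ?_⟩
  have hmap : PD.map (g₁ ∘ c₁) = (PD.map c₁).map g₁ := (Measure.map_map hgm hcm).symm
  rw [hmap]
  calc wassersteinDist PD (PZ.map g₁)
      ≤ wassersteinDist PD ((PD.map c₁).map g₁)
        + wassersteinDist ((PD.map c₁).map g₁) (PZ.map g₁) := wtri _ _ _
    _ ≤ wassersteinDist PD ((PD.map c₁).map g₁)
        + L * wassersteinDist (PD.map c₁) PZ := add_le_add_right (wmap hL _ _) _
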